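/- Let q ∈ ℝ be locally bounded and u : ℝ → ℝ twice differentiable with −u'' + q u = 0 on ℝ (where q(x) = V(x) − E is bounded, |q| ≤ M). If u ∈ L²(ℝ), then limsup_{x→∞} (|u'(x)|² + |u(x)|²)^{1/2} = 0, i.e., (u'(x), u(x)) → 0 as x → ∞. -/

import Mathlib

open MeasureTheory Filter

theorem eigensolution_decay
    (q u u' : ℝ → ℝ) (M : ℝ)
    (hq : ∀ x, |q x| ≤ M)
    (hu' : ∀ x, HasDerivAt u (u' x) x)
    (hu'' : ∀ x, HasDerivAt u' (q x * u x) x)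
    (hL2 : MemLp u 2 volume) :
    Tendsto (fun x => Real.sqrt (u' x ^ 2 + u x ^ 2)) atTop (nhds 0) := by
  have hM : (0:ℝ) ≤ M := (abs_nonneg _).trans (hq 0)
  set K : ℝ := M + 1 with hKdef
  have hK0 : (0:ℝ) < K := by linarith
  set w : ℝ → ℝ := fun x => u' x ^ 2 + u x ^ 2 with hwdef
  have hw0 : ∀ x, 0 ≤ w x := fun x => by positivity
  have hwD : ∀ x, HasDerivAt w (2 * u x * u' x * (q x + 1)) x := by
    intro x
    have h1 : HasDerivAt (fun y => u' y ^ 2 + u y ^ 2) (((2:ℕ):ℝ) * u' x ^ (2 - 1) * (q x * u x)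
      + ((2:ℕ):ℝ) * u x ^ (2 - 1) * u' x) x := ((hu'' x).pow 2).add ((hu' x).pow 2)
    convert h1 using 1
    push_cast
    ring
  have hDbound : ∀ x, |2 * u x * u' x * (q x + 1)| ≤ K * w x := by
    intro x
    have h1 : |2 * u x * u' x| ≤ w x := by
      rw [abs_le]
      simp only [hwdef]
      constructor <;> nlinarith [sq_nonneg (u x + u' x), sq_nonneg (u x - u' x)]
    have h2 : |q x + 1| ≤ K := by
      calc |q x + 1| ≤ |q x| + |(1:ℝ)| := abs_add_le _ _
        _ ≤ K := by rw [abs_one]; linarith [hq x]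
    calc |2 * u x * u' x * (q x + 1)| = |2 * u x * u' x| * |q x + 1| := abs_mul _ _
      _ ≤ w x * K := mul_le_mul h1 h2 (abs_nonneg _) (hw0 x)
      _ = K * w x := mul_comm _ _
  -- Gronwall-type comparison
  have hgd : ∀ x, HasDerivAt (fun y => w y * Real.exp (K * y))
      ((2 * u x * u' x * (q x + 1) + K * w x) * Real.exp (K * x)) x := by
    intro x
    have he : HasDerivAt (fun y => Real.exp (K * y)) (Real.exp (K * x) * (K * 1)) x :=
      ((hasDerivAt_id x).const_mul K).exp
    have : HasDerivAt (fun y => w y * Real.exp (K * y)) (2 * u x * u' x * (q x + 1) * Real.exp (K * x)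
      + w x * (Real.exp (K * x) * (K * 1))) x := (hwD x).mul he
    convert this using 1
    ring
  have hhd : ∀ x, HasDerivAt (fun y => w y * Real.exp (-(K * y)))
      ((2 * u x * u' x * (q x + 1) - K * w x) * Real.exp (-(K * x))) x := by
    intro x
    have he : HasDerivAt (fun y => Real.exp (-(K * y))) (Real.exp (-(K * x)) * -(K * 1)) x :=
      (((hasDerivAt_id x).const_mul K).neg).exp
    have : HasDerivAt (fun y => w y * Real.exp (-(K * y))) (2 * u x * u' x * (q x + 1) * Real.exp (-(K * x))
      + w x * (Real.exp (-(K * x)) * -(K * 1))) x := (hwD x).mul he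
    convert this using 1
    ring
  have hgmono : Monotone (fun y => w y * Real.exp (K * y)) := by
    apply monotone_of_deriv_nonneg
    · exact fun x => ((hgd x).differentiableAt)
    · intro x
      rw [(hgd x).deriv]
      have := (abs_le.mp (hDbound x)).1
      have h2 : (0:ℝ) ≤ 2 * u x * u' x * (q x + 1) + K * w x := by linarith
      positivity
  have hhmono : Antitone (fun y => w y * Real.exp (-(K * y))) := by
    apply antitone_of_deriv_nonpos
    · exact fun x => ((hhd x).differentiableAt)
    · intro x
      rw [(hhd x).deriv]
      have := (abs_le.mp (hDbound x)).2
      have h2 : 2 * u x * u' x * (q x + 1) - K * w x ≤ 0 := by linarith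
      exact mul_nonpos_of_nonpos_of_nonneg h2 (Real.exp_nonneg _)
  -- comparison on intervals
  have comp1 : ∀ s t : ℝ, s ≤ t → w s * Real.exp (-(K * (t - s))) ≤ w t := by
    intro s t hst
    have h := hgmono hst
    have h2 := mul_le_mul_of_nonneg_right h (Real.exp_nonneg (-(K * t)))
    calc w s * Real.exp (-(K * (t - s)))
        = w s * Real.exp (K * s) * Real.exp (-(K * t)) := by
          rw [mul_assoc, ← Real.exp_add]; ring_nf
      _ ≤ w t * Real.exp (K * t) * Real.exp (-(K * t)) := h2
      _ = w t := by rw [mul_assoc, ← Real.exp_add]; simp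
  have comp2 : ∀ s t : ℝ, s ≤ t → w t ≤ w s * Real.exp (K * (t - s)) := by
    intro s t hst
    have h := hhmono hst
    have h2 := mul_le_mul_of_nonneg_right h (Real.exp_nonneg (K * t))
    calc w t = w t * Real.exp (-(K * t)) * Real.exp (K * t) := by
          rw [mul_assoc, ← Real.exp_add]; simp
      _ ≤ w s * Real.exp (-(K * s)) * Real.exp (K * t) := h2
      _ = w s * Real.exp (K * (t - s)) := by rw [mul_assoc, ← Real.exp_add]; ring_nf
  -- integrability
  have hu2int : Integrable (fun x => u x ^ 2) volume := hL2.integrable_sq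
  have hIntOn : ∀ a b : ℝ, IntervalIntegrable (fun x => u x ^ 2) volume a b :=
    fun a b => hu2int.intervalIntegrable
  set r : ℝ := Real.sqrt (Real.exp (-(8 * K)) / 8) with hrdef
  have hr0 : 0 < r := Real.sqrt_pos.mpr (by positivity)
  have hr1 : r ≤ 1 := by
    rw [hrdef, show (1:ℝ) = Real.sqrt 1 by simp]
    apply Real.sqrt_le_sqrt
    have h1 : Real.exp (-(8 * K)) ≤ 1 := Real.exp_le_one_iff.mpr (by linarith)
    linarith
  set κ : ℝ := r * Real.exp (-(4 * K)) / 8 with hκdef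
  have hκ0 : 0 < κ := by positivity
  have key : ∀ x₀ : ℝ, κ * w x₀ ≤ ∫ z in x₀..(x₀ + 4), u z ^ 2 := by
    intro x₀
    rcases (hw0 x₀).eq_or_lt with hW | hW
    · rw [← hW, mul_zero]
      exact intervalIntegral.integral_nonneg (by linarith) (fun z _ => sq_nonneg _)
    set a : ℝ := w x₀ * Real.exp (-(4 * K)) with hadef
    set b : ℝ := w x₀ * Real.exp (4 * K) with hbdef
    have ha0 : 0 < a := by positivity
    have hb0 : 0 < b := by positivity
    have hlow : ∀ z ∈ Set.Icc x₀ (x₀ + 4), a ≤ w z := by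
      intro z hz
      refine le_trans ?_ (comp1 x₀ z hz.1)
      rw [hadef]
      have : Real.exp (-(4 * K)) ≤ Real.exp (-(K * (z - x₀))) := by
        apply Real.exp_le_exp.mpr
        nlinarith [hz.2]
      nlinarith [hw0 x₀]
    have hup : ∀ z ∈ Set.Icc x₀ (x₀ + 4), w z ≤ b := by
      intro z hz
      refine le_trans (comp2 x₀ z hz.1) ?_
      rw [hbdef]
      have : Real.exp (K * (z - x₀)) ≤ Real.exp (4 * K) := by
        apply Real.exp_le_exp.mpr
        nlinarith [hz.2]
      nlinarith [hw0 x₀]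
    -- Subclaim A : somewhere u^2 is big
    have hcontu : ∀ (s t : ℝ), ContinuousOn u (Set.Icc s t) :=
      fun s t => fun x _ => (hu' x).continuousAt.continuousWithinAt
    have hEx : ∃ y ∈ Set.Icc x₀ (x₀ + 3), a / 2 ≤ u y ^ 2 := by
      by_contra hcon
      push_neg at hcon
      obtain ⟨c, hc, hslope⟩ := exists_hasDerivAt_eq_slope u u'
        (by linarith : x₀ < x₀ + 3) (hcontu x₀ (x₀ + 3)) (fun x _ => hu' x)
      have hc4 : c ∈ Set.Icc x₀ (x₀ + 4) := ⟨hc.1.le, by linarith [hc.2]⟩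
      have h1 : a ≤ w c := hlow c hc4
      have h2 : u c ^ 2 < a / 2 := hcon c ⟨hc.1.le, hc.2.le⟩
      have h3 : a / 2 < u' c ^ 2 := by
        simp only [hwdef] at h1; linarith
      have h4 : u' c = (u (x₀ + 3) - u x₀) / 3 := by
        rw [hslope]; ring_nf
      have h5 : u (x₀ + 3) ^ 2 < a / 2 := hcon _ ⟨by linarith, le_refl _⟩
      have h6 : u x₀ ^ 2 < a / 2 := hcon _ ⟨le_refl _, by linarith⟩
      rw [h4] at h3
      nlinarith [sq_nonneg (u (x₀ + 3) + u x₀)]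
    obtain ⟨y, hy, hya2⟩ := hEx
    have hyr4 : y + r ≤ x₀ + 4 := by linarith [hy.2]
    -- bound |u'| on the interval
    have hbz : ∀ z ∈ Set.Icc x₀ (x₀ + 4), |u' z| ≤ Real.sqrt b := by
      intro z hz
      have h := hup z hz
      simp only [hwdef] at h
      calc |u' z| = Real.sqrt (u' z ^ 2) := (Real.sqrt_sq_eq_abs _).symm
        _ ≤ Real.sqrt b := Real.sqrt_le_sqrt (by nlinarith [sq_nonneg (u z)])
    have hsbr : Real.sqrt b * r = Real.sqrt (a / 8) := by
      rw [hrdef, ← Real.sqrt_mul hb0.le]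
      congr 1
      rw [hbdef, hadef, show w x₀ * Real.exp (4 * K) * (Real.exp (-(8 * K)) / 8)
        = w x₀ * (Real.exp (4 * K) * Real.exp (-(8 * K))) / 8 by ring, ← Real.exp_add]
      ring_nf
    have hsa2 : Real.sqrt (a / 2) = 2 * Real.sqrt (a / 8) := by
      rw [show a / 2 = 2 ^ 2 * (a / 8) by ring, Real.sqrt_mul (by positivity),
        Real.sqrt_sq (by norm_num)]
    -- Subclaim B : u^2 ≥ a/8 on [y, y+r]
    have hB8 : ∀ z ∈ Set.Icc y (y + r), a / 8 ≤ u z ^ 2 := by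
      intro z hz
      have huy : Real.sqrt (a / 2) ≤ |u y| := by
        rw [← Real.sqrt_sq_eq_abs]
        exact Real.sqrt_le_sqrt hya2
      have hdiff : |u z - u y| ≤ Real.sqrt (a / 8) := by
        rcases eq_or_lt_of_le hz.1 with heq | hlt
        · rw [← heq, sub_self, abs_zero]; positivity
        · obtain ⟨c, hc, hsl⟩ := exists_hasDerivAt_eq_slope u u' hlt
            (hcontu y z) (fun x _ => hu' x)
          have hcic : c ∈ Set.Icc x₀ (x₀ + 4) :=
            ⟨by linarith [hc.1, hy.1], by linarith [hc.2, hz.2, hyr4]⟩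
          have heq2 : u z - u y = u' c * (z - y) := by
            rw [hsl, div_mul_cancel₀ _ (sub_ne_zero.mpr hlt.ne')]
          rw [heq2, abs_mul, abs_of_nonneg (by linarith : (0:ℝ) ≤ z - y)]
          calc |u' c| * (z - y) ≤ Real.sqrt b * r :=
              mul_le_mul (hbz c hcic) (by linarith [hz.2]) (by linarith) (Real.sqrt_nonneg _)
            _ = Real.sqrt (a / 8) := hsbr
      have h7 : Real.sqrt (a / 8) ≤ |u z| := by
        have h8 := abs_sub_abs_le_abs_sub (u y) (u z)
        rw [abs_sub_comm] at h8
        linarith [hsa2]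
      calc a / 8 = Real.sqrt (a / 8) ^ 2 := (Real.sq_sqrt (by positivity)).symm
        _ ≤ |u z| ^ 2 := by nlinarith [Real.sqrt_nonneg (a / 8)]
        _ = u z ^ 2 := sq_abs _
    -- integral lower bound
    have hI1 : r * (a / 8) ≤ ∫ z in y..(y + r), u z ^ 2 := by
      have h0 := intervalIntegral.integral_mono_on (by linarith : y ≤ y + r)
        (intervalIntegrable_const) (hIntOn y (y + r)) hB8
      rw [intervalIntegral.integral_const, smul_eq_mul] at h0
      calc r * (a / 8) = (y + r - y) * (a / 8) := by ring
        _ ≤ _ := h0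
    have hsplit : ∫ z in x₀..(x₀ + 4), u z ^ 2
        = (∫ z in x₀..y, u z ^ 2) + ((∫ z in y..(y + r), u z ^ 2)
          + ∫ z in (y + r)..(x₀ + 4), u z ^ 2) := by
      rw [intervalIntegral.integral_add_adjacent_intervals (hIntOn y (y + r))
        (hIntOn (y + r) (x₀ + 4)),
        intervalIntegral.integral_add_adjacent_intervals (hIntOn x₀ y) (hIntOn y (x₀ + 4))]
    have hnn1 : 0 ≤ ∫ z in x₀..y, u z ^ 2 :=
      intervalIntegral.integral_nonneg hy.1 (fun z _ => sq_nonneg _)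
    have hnn2 : 0 ≤ ∫ z in (y + r)..(x₀ + 4), u z ^ 2 :=
      intervalIntegral.integral_nonneg hyr4 (fun z _ => sq_nonneg _)
    have hfin : κ * w x₀ = r * (a / 8) := by rw [hκdef, hadef]; ring
    rw [hsplit, hfin]
    linarith
  -- the tail integrals tend to 0
  have hIoi : IntegrableOn (fun x => u x ^ 2) (Set.Ioi 0) volume := hu2int.integrableOn
  have h1 : Tendsto (fun x : ℝ => ∫ t in (0:ℝ)..x, u t ^ 2) atTop
      (nhds (∫ t in Set.Ioi (0:ℝ), u t ^ 2)) :=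
    intervalIntegral_tendsto_integral_Ioi 0 hIoi tendsto_id
  have h2 : Tendsto (fun x : ℝ => ∫ t in (0:ℝ)..(x + 4), u t ^ 2) atTop
      (nhds (∫ t in Set.Ioi (0:ℝ), u t ^ 2)) :=
    intervalIntegral_tendsto_integral_Ioi 0 hIoi (tendsto_atTop_add_const_right atTop 4 tendsto_id)
  have h3 : Tendsto (fun x : ℝ => ∫ z in x..(x + 4), u z ^ 2) atTop (nhds 0) := by
    have h4 := h2.sub h1
    rw [sub_self] at h4
    refine h4.congr (fun x => ?_)
    rw [← intervalIntegral.integral_add_adjacent_intervals (hIntOn 0 x) (hIntOn x (x + 4))]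
    ring
  -- squeeze
  have hsq : Tendsto (fun x : ℝ => Real.sqrt ((∫ z in x..(x + 4), u z ^ 2) / κ)) atTop
      (nhds 0) := by
    have h5 := (h3.div_const κ).sqrt
    rwa [zero_div, Real.sqrt_zero] at h5
  refine tendsto_of_tendsto_of_tendsto_of_le_of_le tendsto_const_nhds hsq
    (fun x => Real.sqrt_nonneg _) (fun x => ?_)
  apply Real.sqrt_le_sqrt
  rw [le_div_iff₀ hκ0]
  have := key x
  simp only [hwdef] at this
  linarith
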